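/- Let Q be a finite quiver with no directed cycles and with exactly one sink s (a vertex with no outgoing arrows), and let R be a set of 2-cells on Q such that the outgoing link of every vertex is connected. Then the quotient of the free groupoid on Q by the relations p = q for all {p, q} ∈ R is thin: any two parallel morphisms in this quotient groupoid are equal. Equivalently, any two parallel (undirected) combinatorial paths in Q are combinatorially homotopic with respect to R. -/

import Mathlib

namespace Stmt6

open Quiver CategoryTheory

universe u v
variable {V : Type u} [Quiver.{v + 1} V]

/-- A directed path in a quiver, viewed as a morphism of the free groupoid on the quiver. -/
def evalPath {x y : V} (p : Quiver.Path x y) :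
    (Quiver.FreeGroupoid.of V).obj x ⟶ (Quiver.FreeGroupoid.of V).obj y :=
  CategoryTheory.composePath ((Quiver.FreeGroupoid.of V).mapPath p)

/-- The relations `p = q`, for all 2-cells `{p, q} ∈ R`, viewed as a family of relations on
the hom-sets of the free groupoid on the quiver. -/
inductive GammaRel (R : ∀ ⦃x y : V⦄, Quiver.Path x y → Quiver.Path x y → Prop) :
    HomRel (Quiver.FreeGroupoid V)
  | mk {x y : V} {p q : Quiver.Path x y} (h : R p q) : GammaRel R (evalPath p) (evalPath q)

/-- The first arrow of a directed path (as an arrow out of the source vertex),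
`none` for the empty path. -/
def firstArrow : ∀ {x z : V}, Quiver.Path x z → Option (Σ y : V, x ⟶ y)
  | _, _, Quiver.Path.nil => none
  | _, _, Quiver.Path.cons Quiver.Path.nil e => some ⟨_, e⟩
  | _, _, Quiver.Path.cons (Quiver.Path.cons p e') _ => firstArrow (Quiver.Path.cons p e')

/-- The directed path `p` begins with the arrow `e`. -/
def StartsWith {x z : V} (p : Quiver.Path x z) (e : Σ y : V, x ⟶ y) : Prop :=
  firstArrow p = some e

/-- Two arrows `e`, `e'` out of `x` are adjacent in the outgoing link of `x` if some
2-cell `{r, r'} ∈ R` has both its paths starting at `x`, with `r` beginning with `e`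
and `r'` beginning with `e'`. -/
def LinkAdj (R : ∀ ⦃x y : V⦄, Quiver.Path x y → Quiver.Path x y → Prop)
    {x : V} (e e' : Σ y : V, x ⟶ y) : Prop :=
  ∃ (z : V) (r r' : Quiver.Path x z), R r r' ∧ StartsWith r e ∧ StartsWith r' e'

/-- The outgoing link of `x` is connected: any two arrows out of `x` are related by a
chain of (undirected) adjacencies. -/
def LinkConnected (R : ∀ ⦃x y : V⦄, Quiver.Path x y → Quiver.Path x y → Prop) (x : V) : Prop :=
  ∀ e e' : Σ y : V, x ⟶ y,
    Relation.ReflTransGen (fun a b => LinkAdj R a b ∨ LinkAdj R b a) e e'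

/-! ### Auxiliary lemmas -/

theorem evalPath_comp {x y z : V} (p : Quiver.Path x y) (q : Quiver.Path y z) :
    evalPath (p.comp q) = evalPath p ≫ evalPath q := by
  unfold evalPath
  rw [Prefunctor.mapPath_comp, CategoryTheory.composePath_comp]

theorem evalPath_toPath {x y : V} (e : x ⟶ y) :
    evalPath e.toPath = (Quiver.FreeGroupoid.of V).map e := by
  unfold evalPath
  rw [Prefunctor.mapPath_toPath, CategoryTheory.composePath_toPath]

/-- Decomposition of a nonempty path into its first arrow and the rest. -/
theorem exists_decomp {x z : V} (p : Quiver.Path x z) (hp : p.length ≠ 0) :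
    ∃ (e : Σ y : V, x ⟶ y) (p' : Quiver.Path e.1 z),
      p = e.2.toPath.comp p' ∧ StartsWith p e := by
  induction p with
  | nil => simp at hp
  | cons p f ih =>
    cases p with
    | nil =>
      refine ⟨⟨_, f⟩, Quiver.Path.nil, ?_, ?_⟩
      · rfl
      · show firstArrow (Quiver.Path.nil.cons f) = some ⟨_, f⟩
        simp only [firstArrow]
    | cons p' f' =>
      obtain ⟨e, q, hq, hfa⟩ := ih (by simp)
      refine ⟨e, q.cons f, ?_, ?_⟩
      · rw [hq, Quiver.Path.comp_cons]
      · show firstArrow ((p'.cons f').cons f) = some e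
        simp only [firstArrow]
        exact hfa

theorem wf_aux {V : Type u} [Quiver.{v + 1} V] [Finite V]
    (hacyclic : ∀ (x : V) (p : Quiver.Path x x), p.length = 0) :
    WellFounded (fun a b : V => ∃ p : Quiver.Path b a, p.length ≠ 0) := by
  haveI : IsTrans V (fun a b : V => ∃ p : Quiver.Path b a, p.length ≠ 0) := by
    constructor
    rintro a b c ⟨p, hp⟩ ⟨q, hq⟩
    exact ⟨q.comp p, by rw [Quiver.Path.length_comp]; omega⟩
  haveI : IsIrrefl V (fun a b : V => ∃ p : Quiver.Path b a, p.length ≠ 0) := by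
    constructor
    rintro a ⟨p, hp⟩
    exact hp (hacyclic a p)
  exact Finite.wellFounded_of_trans_of_irrefl _

theorem exists_path_to_sink {V : Type u} [Quiver.{v + 1} V] [Finite V]
    (hacyclic : ∀ (x : V) (p : Quiver.Path x x), p.length = 0)
    (s : V) (huniq : ∀ t : V, (∀ y : V, IsEmpty (t ⟶ y)) → t = s) :
    ∀ x : V, Nonempty (Quiver.Path x s) := by
  intro x
  induction x using (wf_aux hacyclic).induction with
  | _ x ih =>
    by_cases hx : x = s
    · subst hx; exact ⟨Quiver.Path.nil⟩
    · have h1 : ¬ ∀ y, IsEmpty (x ⟶ y) := fun h => hx (huniq x h)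
      push_neg at h1
      obtain ⟨y, hy⟩ := h1
      obtain ⟨e⟩ := hy
      obtain ⟨p⟩ := ih y ⟨e.toPath, by simp [Quiver.Hom.toPath]⟩
      exact ⟨e.toPath.comp p⟩

/-- Key combinatorial lemma: any two directed paths to the sink become equal in the
quotient groupoid. -/
theorem main_paths {V : Type u} [Quiver.{v + 1} V] [Finite V]
    (R : ∀ ⦃x y : V⦄, Quiver.Path x y → Quiver.Path x y → Prop)
    (hnonempty : ∀ ⦃x y : V⦄ (p q : Quiver.Path x y), R p q → p.length ≠ 0 ∧ q.length ≠ 0)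
    (hacyclic : ∀ (x : V) (p : Quiver.Path x x), p.length = 0)
    (s : V) (huniq : ∀ t : V, (∀ y : V, IsEmpty (t ⟶ y)) → t = s)
    (hlink : ∀ x : V, LinkConnected R x) :
    ∀ (x : V) (p q : Quiver.Path x s),
      (CategoryTheory.Quotient.functor (GammaRel R)).map (evalPath p)
        = (CategoryTheory.Quotient.functor (GammaRel R)).map (evalPath q) := by
  have pathto := exists_path_to_sink hacyclic s huniq
  intro x
  induction x using (wf_aux hacyclic).induction with
  | _ x ih =>
    intro p q
    by_cases hx : x = s
    · subst hx
      rw [p.eq_nil_of_length_zero (hacyclic _ p), q.eq_nil_of_length_zero (hacyclic _ q)]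
    · have hplen : p.length ≠ 0 := fun h => hx (p.eq_of_length_zero h)
      have hqlen : q.length ≠ 0 := fun h => hx (q.eq_of_length_zero h)
      obtain ⟨e, p', hp, _⟩ := exists_decomp p hplen
      obtain ⟨e', q', hq, _⟩ := exists_decomp q hqlen
      -- Claim : for adjacent (or equal, or chained) first arrows, the corresponding
      -- completed paths become equal in the quotient.
      have claim_refl : ∀ (a : Σ y : V, x ⟶ y) (pa pb : Quiver.Path a.1 s),
          (CategoryTheory.Quotient.functor (GammaRel R)).map (evalPath (a.2.toPath.comp pa))
            = (CategoryTheory.Quotient.functor (GammaRel R)).map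
                (evalPath (a.2.toPath.comp pb)) := by
        intro a pa pb
        rw [evalPath_comp, evalPath_comp, Functor.map_comp, Functor.map_comp,
          ih a.1 ⟨a.2.toPath, by simp [Quiver.Hom.toPath]⟩ pa pb]
      have claim_adj : ∀ (a b : Σ y : V, x ⟶ y), LinkAdj R a b →
          ∀ (pa : Quiver.Path a.1 s) (pb : Quiver.Path b.1 s),
          (CategoryTheory.Quotient.functor (GammaRel R)).map (evalPath (a.2.toPath.comp pa))
            = (CategoryTheory.Quotient.functor (GammaRel R)).map
                (evalPath (b.2.toPath.comp pb)) := by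
        rintro a b ⟨z, r, r', hR, hra, hrb⟩ pa pb
        obtain ⟨hrl, hr'l⟩ := hnonempty r r' hR
        obtain ⟨ea, r₂, hre, hfr⟩ := exists_decomp r hrl
        obtain ⟨eb, r₂', hre', hfr'⟩ := exists_decomp r' hr'l
        unfold StartsWith at hra hrb hfr hfr'
        rw [hfr] at hra
        rw [hfr'] at hrb
        obtain rfl : a = ea := (Option.some_injective _ hra).symm
        obtain rfl : b = eb := (Option.some_injective _ hrb).symm
        obtain ⟨π⟩ := pathto z
        have key : ∀ (c : Σ y : V, x ⟶ y) (r₃ : Quiver.Path c.1 z) (pc : Quiver.Path c.1 s),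
            (CategoryTheory.Quotient.functor (GammaRel R)).map (evalPath (c.2.toPath.comp pc))
              = (CategoryTheory.Quotient.functor (GammaRel R)).map
                  (evalPath (c.2.toPath.comp r₃))
                ≫ (CategoryTheory.Quotient.functor (GammaRel R)).map (evalPath π) := by
          intro c r₃ pc
          rw [evalPath_comp, Functor.map_comp,
            ih c.1 ⟨c.2.toPath, by simp [Quiver.Hom.toPath]⟩ pc (r₃.comp π)]
          simp only [evalPath_comp, Functor.map_comp, Category.assoc]
        calc (CategoryTheory.Quotient.functor (GammaRel R)).map (evalPath (a.2.toPath.comp pa))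
            = (CategoryTheory.Quotient.functor (GammaRel R)).map
                (evalPath (a.2.toPath.comp r₂))
              ≫ (CategoryTheory.Quotient.functor (GammaRel R)).map (evalPath π) :=
              key a r₂ pa
          _ = (CategoryTheory.Quotient.functor (GammaRel R)).map (evalPath r)
              ≫ (CategoryTheory.Quotient.functor (GammaRel R)).map (evalPath π) := by
              rw [← hre]
          _ = (CategoryTheory.Quotient.functor (GammaRel R)).map (evalPath r')
              ≫ (CategoryTheory.Quotient.functor (GammaRel R)).map (evalPath π) := by
              rw [CategoryTheory.Quotient.sound (GammaRel R) (GammaRel.mk hR)]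
          _ = (CategoryTheory.Quotient.functor (GammaRel R)).map
                (evalPath (b.2.toPath.comp r₂'))
              ≫ (CategoryTheory.Quotient.functor (GammaRel R)).map (evalPath π) := by
              rw [← hre']
          _ = (CategoryTheory.Quotient.functor (GammaRel R)).map
                (evalPath (b.2.toPath.comp pb)) := (key b r₂' pb).symm
      have chain : ∀ (a b : Σ y : V, x ⟶ y),
          Relation.ReflTransGen (fun u v => LinkAdj R u v ∨ LinkAdj R v u) a b →
          ∀ (pa : Quiver.Path a.1 s) (pb : Quiver.Path b.1 s),
          (CategoryTheory.Quotient.functor (GammaRel R)).map (evalPath (a.2.toPath.comp pa))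
            = (CategoryTheory.Quotient.functor (GammaRel R)).map
                (evalPath (b.2.toPath.comp pb)) := by
        intro a b h
        induction h with
        | refl => exact claim_refl a
        | @tail m c hmc hstep ih2 =>
          intro pa pc
          obtain ⟨ρ⟩ := pathto m.1
          refine (ih2 pa ρ).trans ?_
          cases hstep with
          | inl h' => exact claim_adj m c h' ρ pc
          | inr h' => exact (claim_adj c m h' pc ρ).symm
      rw [hp, hq]
      exact chain e e' (hlink x e e') p' q'

/-! ### Normal form in the quotient groupoid -/

section NormalForm

variable {V : Type u} [Quiver.{v + 1} V]
  (R : ∀ ⦃x y : V⦄, Quiver.Path x y → Quiver.Path x y → Prop) (s : V)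

/-- The chosen comparison morphism from a vertex to the sink, in the quotient groupoid. -/
def NF (π : ∀ x : V, Quiver.Path x s) (x : V) :
    (CategoryTheory.Quotient.functor (GammaRel R)).obj ((Quiver.FreeGroupoid.of V).obj x) ⟶
      (CategoryTheory.Quotient.functor (GammaRel R)).obj ((Quiver.FreeGroupoid.of V).obj s) :=
  (CategoryTheory.Quotient.functor (GammaRel R)).map (evalPath (π x))

theorem NF_isIso (π : ∀ x : V, Quiver.Path x s) (x : V) : IsIso (NF R s π x) := by
  unfold NF
  infer_instance

theorem harrow (π : ∀ x : V, Quiver.Path x s)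
    (hmain : ∀ (x : V) (p q : Quiver.Path x s),
      (CategoryTheory.Quotient.functor (GammaRel R)).map (evalPath p)
        = (CategoryTheory.Quotient.functor (GammaRel R)).map (evalPath q))
    {a b : V} (e : a ⟶ b) :
    (CategoryTheory.Quotient.functor (GammaRel R)).map ((Quiver.FreeGroupoid.of V).map e)
      ≫ NF R s π b = NF R s π a := by
  unfold NF
  rw [← evalPath_toPath e, ← Functor.map_comp, ← evalPath_comp]
  exact hmain a (e.toPath.comp (π b)) (π a)

theorem norm_form (π : ∀ x : V, Quiver.Path x s)
    (hmain : ∀ (x : V) (p q : Quiver.Path x s),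
      (CategoryTheory.Quotient.functor (GammaRel R)).map (evalPath p)
        = (CategoryTheory.Quotient.functor (GammaRel R)).map (evalPath q))
    (X Y : Quiver.FreeGroupoid V) (f : X ⟶ Y) :
    haveI := NF_isIso R s π
    (CategoryTheory.Quotient.functor (GammaRel R)).map f
      = NF R s π X.as ≫ inv (NF R s π Y.as) := by
  haveI := NF_isIso R s π
  have edge : ∀ {c d : V} (e : @Quiver.Hom (Quiver.Symmetrify V) _ c d),
      (CategoryTheory.Quotient.functor (GammaRel R)).map
          ((Quot.mk _ e.toPath :
            ((Quiver.FreeGroupoid.of V).obj c : Quiver.FreeGroupoid V) ⟶ (Quiver.FreeGroupoid.of V).obj d))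
        = NF R s π c ≫ inv (NF R s π d) := by
    intro c d e
    obtain a | a := e
    · -- forward arrow
      have h1 : ((Quot.mk _ (Quiver.Hom.toPath (Sum.inl a)) :
            ((Quiver.FreeGroupoid.of V).obj c : Quiver.FreeGroupoid V) ⟶ (Quiver.FreeGroupoid.of V).obj d))
          = (Quiver.FreeGroupoid.of V).map a := rfl
      erw [h1, ← harrow R s π hmain a]
      simp
    · -- backward arrow
      have hvu : ((Quot.mk _ (Quiver.Hom.toPath (Sum.inr a)) :
            ((Quiver.FreeGroupoid.of V).obj c : Quiver.FreeGroupoid V) ⟶ (Quiver.FreeGroupoid.of V).obj d))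
            ≫ (Quiver.FreeGroupoid.of V).map a = 𝟙 _ :=
        (Quot.sound (HomRel.CompClosure.of
          (Quiver.FreeGroupoid.redStep.step _ _ (Sum.inr a)))).symm
      have hv : (CategoryTheory.Quotient.functor (GammaRel R)).map
            ((Quot.mk _ (Quiver.Hom.toPath (Sum.inr a)) :
              ((Quiver.FreeGroupoid.of V).obj c : Quiver.FreeGroupoid V) ⟶ (Quiver.FreeGroupoid.of V).obj d))
            ≫ (CategoryTheory.Quotient.functor (GammaRel R)).map ((Quiver.FreeGroupoid.of V).map a)
            = 𝟙 _ := by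
        erw [← CategoryTheory.Functor.map_comp, hvu, CategoryTheory.Functor.map_id]
      have hvd : (CategoryTheory.Quotient.functor (GammaRel R)).map
            ((Quot.mk _ (Quiver.Hom.toPath (Sum.inr a)) :
              ((Quiver.FreeGroupoid.of V).obj c : Quiver.FreeGroupoid V) ⟶ (Quiver.FreeGroupoid.of V).obj d))
            ≫ NF R s π d = NF R s π c := by
        rw [← harrow R s π hmain a, ← Category.assoc, hv, Category.id_comp]
      calc (CategoryTheory.Quotient.functor (GammaRel R)).map
              ((Quot.mk _ (Quiver.Hom.toPath (Sum.inr a)) :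
                ((Quiver.FreeGroupoid.of V).obj c : Quiver.FreeGroupoid V) ⟶ (Quiver.FreeGroupoid.of V).obj d))
          = ((CategoryTheory.Quotient.functor (GammaRel R)).map
              ((Quot.mk _ (Quiver.Hom.toPath (Sum.inr a)) :
                ((Quiver.FreeGroupoid.of V).obj c : Quiver.FreeGroupoid V) ⟶ (Quiver.FreeGroupoid.of V).obj d))
              ≫ NF R s π d) ≫ inv (NF R s π d) := by simp
        _ = NF R s π c ≫ inv (NF R s π d) := by rw [hvd]
  obtain ⟨X⟩ := X
  obtain ⟨Y⟩ := Y
  induction f using Quot.ind with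
  | _ f₀ =>
    change @Quiver.Path (Quiver.Symmetrify V) (Quiver.symmetrifyQuiver V) X Y at f₀
    change _ = NF R s π X ≫ inv (NF R s π Y)
    induction f₀ with
    | nil =>
      show (CategoryTheory.Quotient.functor (GammaRel R)).map (𝟙 _) = _
      erw [CategoryTheory.Functor.map_id]
      exact (IsIso.hom_inv_id (I := this X) _).symm
    | @cons b c p e ihp =>
      have hsplit : ((Quot.mk _ (@Quiver.Path.cons (Quiver.Symmetrify V) _ _ _ _ p e) :
            ((Quiver.FreeGroupoid.of V).obj X : Quiver.FreeGroupoid V) ⟶ (Quiver.FreeGroupoid.of V).obj c))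
          = ((Quot.mk _ p :
              ((Quiver.FreeGroupoid.of V).obj X : Quiver.FreeGroupoid V) ⟶ (Quiver.FreeGroupoid.of V).obj b)
            ≫ (Quot.mk _ (@Quiver.Hom.toPath (Quiver.Symmetrify V) _ _ _ e) :
              ((Quiver.FreeGroupoid.of V).obj b : Quiver.FreeGroupoid V) ⟶ (Quiver.FreeGroupoid.of V).obj c) :
              ((Quiver.FreeGroupoid.of V).obj X : Quiver.FreeGroupoid V) ⟶ (Quiver.FreeGroupoid.of V).obj c) := by
        rfl
      erw [hsplit, Functor.map_comp, ihp, edge e]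
      exact (Category.assoc _ _ _).trans (congrArg _ (IsIso.inv_hom_id_assoc (I := this b) _ _))
end NormalForm

/-- **Theorem 1.5 (combinatorial form).**  Let `Q` be a finite quiver with no directed
cycles and exactly one sink `s`, and let `R` be a set of 2-cells on `Q` such that the
outgoing link of every vertex is connected.  Then the quotient of the free groupoid on `Q`
by the relations `p = q`, for all 2-cells `{p, q} ∈ R`, is thin: any two parallel morphisms
in the quotient groupoid are equal.  (Equivalently, any two parallel undirected
combinatorial paths on `Q` are combinatorially homotopic with respect to `R`.) -/
theorem quotient_freeGroupoid_thin
    {V : Type u} [Quiver.{v + 1} V] [Finite V] [∀ a b : V, Finite (a ⟶ b)]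
    (R : ∀ ⦃x y : V⦄, Quiver.Path x y → Quiver.Path x y → Prop)
    (hsymm : ∀ ⦃x y : V⦄ (p q : Quiver.Path x y), R p q → R q p)
    (hnonempty : ∀ ⦃x y : V⦄ (p q : Quiver.Path x y), R p q → p.length ≠ 0 ∧ q.length ≠ 0)
    (hacyclic : ∀ (x : V) (p : Quiver.Path x x), p.length = 0)
    (s : V) (hs : ∀ y : V, IsEmpty (s ⟶ y))
    (huniq : ∀ t : V, (∀ y : V, IsEmpty (t ⟶ y)) → t = s)
    (hlink : ∀ x : V, LinkConnected R x) :
    ∀ (a b : CategoryTheory.Quotient (GammaRel R)) (f g : a ⟶ b), f = g := by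
  have hmain := main_paths R hnonempty hacyclic s huniq hlink
  have pathto := exists_path_to_sink hacyclic s huniq
  let π : ∀ x : V, Quiver.Path x s := fun x => (pathto x).some
  have hnorm := norm_form R s π hmain
  intro a b f g
  obtain ⟨A⟩ := a
  obtain ⟨B⟩ := b
  induction f using Quot.ind with
  | _ f₀ =>
    induction g using Quot.ind with
    | _ g₀ =>
      exact (hnorm A B f₀).trans (hnorm A B g₀).symm

end Stmt6
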